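/- For a default theory D (with empty knowledge base), the set of consistent stable extensions of D equals the union over all stable default sets S of D of the deductive closures Th({γ(d) | d ∈ S}); moreover, each stable default set S is a set of generating defaults of the extension Th({γ(d) | d ∈ S}). -/

import Mathlib

inductive PF (V : Type) : Type
  | var : V → PF V
  | top : PF V
  | bot : PF V
  | neg : PF V → PF V
  | conj : PF V → PF V → PF V
  | disj : PF V → PF V → PF V

namespace PF
variable {V : Type}
def eval (θ : V → Bool) : PF V → Bool
  | var a => θ a
  | top => true
  | bot => false
  | neg f => !(eval θ f)
  | conj f g => eval θ f && eval θ g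
  | disj f g => eval θ f || eval θ g
end PF

/-- A set of formulas is satisfiable if one assignment satisfies all of them. -/
def SatSet {V : Type} (S : Set (PF V)) : Prop := ∃ θ : V → Bool, ∀ f ∈ S, f.eval θ = true

/-- Semantic consequence of a set of formulas. -/
def Entails {V : Type} (S : Set (PF V)) (g : PF V) : Prop :=
  ∀ θ : V → Bool, (∀ f ∈ S, f.eval θ = true) → g.eval θ = true

/-- Deductive closure. -/
def Th {V : Type} (S : Set (PF V)) : Set (PF V) := {g | Entails S g}

/-- A default rule (prerequisite, justification, conclusion). -/
structure DRule (V : Type) where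
  pre : PF V
  jus : PF V
  con : PF V

/-- The defining conditions of Reiter's Γ operator: G contains W, is deductively
closed, and is closed under defaults applicable w.r.t. E. -/
def GammaPred {V : Type} (W : Set (PF V)) (D : Set (DRule V)) (E G : Set (PF V)) : Prop :=
  W ⊆ G ∧ Th G ⊆ G ∧ ∀ d ∈ D, d.pre ∈ G → d.jus.neg ∉ E → d.con ∈ G

/-- Γ(E): the smallest set satisfying the conditions above. -/
def Gamma {V : Type} (W : Set (PF V)) (D : Set (DRule V)) (E : Set (PF V)) : Set (PF V) :=
  ⋂₀ {G | GammaPred W D E G}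

/-- E is a stable extension of ⟨W, D⟩ iff E = Γ(E). -/
def StableExt {V : Type} (W : Set (PF V)) (D : Set (DRule V)) (E : Set (PF V)) : Prop :=
  E = Gamma W D E

/-- E(S): conclusions of the defaults in S. -/
def concls {V : Type} (S : Set (DRule V)) : Set (PF V) := DRule.con '' S

/-- d is α-satisfiable in S. -/
def ASat {V : Type} (S : Set (DRule V)) (d : DRule V) : Prop :=
  SatSet (concls S ∪ {d.pre.neg})

/-- d is β-satisfiable in S. -/
def BSat {V : Type} (S : Set (DRule V)) (d : DRule V) : Prop :=
  ¬ SatSet (concls S ∪ {d.jus})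

/-- d is γ-satisfiable in S. -/
def GSat {V : Type} (S : Set (DRule V)) (d : DRule V) : Prop := d ∈ S

/-- S is a satisfying default set of D. -/
def SatisfyingSet {V : Type} (D S : Set (DRule V)) : Prop :=
  S ⊆ D ∧ ∀ d ∈ D, ASat S d ∨ BSat S d ∨ GSat S d

/-- S is a stable default set of D. -/
def StableSet {V : Type} (D S : Set (DRule V)) : Prop :=
  SatisfyingSet D S ∧
    ¬ ∃ S', S' ⊂ S ∧ ∀ d ∈ D, ASat S' d ∨ BSat S d ∨ GSat S' d

section Aux

variable {V : Type}

lemma subset_Th (X : Set (PF V)) : X ⊆ Th X := fun f hf θ hθ => hθ f hf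

lemma Th_mono {X Y : Set (PF V)} (h : X ⊆ Y) : Th X ⊆ Th Y :=
  fun g hg θ hθ => hg θ (fun f hf => hθ f (h hf))

lemma Th_idem (X : Set (PF V)) : Th (Th X) ⊆ Th X :=
  fun g hg θ hθ => hg θ (fun f hf => hf θ hθ)

lemma concls_mono {S S' : Set (DRule V)} (h : S ⊆ S') : concls S ⊆ concls S' :=
  Set.image_mono h

lemma ASat_iff (S : Set (DRule V)) (d : DRule V) :
    ASat S d ↔ d.pre ∉ Th (concls S) := by
  constructor
  · rintro ⟨θ, hθ⟩ hpre
    have h1 := hθ d.pre.neg (Or.inr rfl)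
    have h2 := hpre θ (fun f hf => hθ f (Or.inl hf))
    simp [PF.eval, h2] at h1
  · intro h
    simp only [Th, Entails, Set.mem_setOf_eq] at h
    push_neg at h
    obtain ⟨θ, hθ, hpre⟩ := h
    refine ⟨θ, ?_⟩
    rintro f (hf | rfl)
    · exact hθ f hf
    · simp only [PF.eval]
      simpa using hpre

lemma BSat_iff (S : Set (DRule V)) (d : DRule V) :
    BSat S d ↔ d.jus.neg ∈ Th (concls S) := by
  constructor
  · intro h θ hθ
    simp only [PF.eval]
    by_contra hb
    exact h ⟨θ, by
      rintro f (hf | rfl)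
      · exact hθ f hf
      · simpa using hb⟩
  · rintro h ⟨θ, hθ⟩
    have h1 := h θ (fun f hf => hθ f (Or.inl hf))
    have h2 := hθ d.jus (Or.inr rfl)
    simp [PF.eval, h2] at h1

lemma bot_mem_Th_iff (X : Set (PF V)) : PF.bot ∈ Th X ↔ ¬ SatSet X := by
  constructor
  · rintro h ⟨θ, hθ⟩
    have := h θ hθ
    simp [PF.eval] at this
  · intro h θ hθ
    exact absurd ⟨θ, hθ⟩ h

/-- Iteration of the applicable-defaults operator. -/
def stage (D : Set (DRule V)) (E : Set (PF V)) : ℕ → Set (DRule V)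
  | 0 => ∅
  | n+1 => {d | d ∈ D ∧ d.pre ∈ Th (concls (stage D E n)) ∧ d.jus.neg ∉ E}

lemma stage_subset_D (D : Set (DRule V)) (E : Set (PF V)) (n : ℕ) :
    stage D E n ⊆ D := by
  cases n with
  | zero => simp [stage]
  | succ n => intro d hd; exact hd.1

lemma stage_mono_succ (D : Set (DRule V)) (E : Set (PF V)) (n : ℕ) :
    stage D E n ⊆ stage D E (n+1) := by
  induction n with
  | zero => simp [stage]
  | succ n ih =>
    rintro d ⟨h1, h2, h3⟩
    exact ⟨h1, Th_mono (concls_mono ih) h2, h3⟩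

/-- The finite fixed-point characterization of Γ(E). -/
lemma exists_T (D : Set (DRule V)) (hD : D.Finite) (E : Set (PF V)) :
    ∃ T : Set (DRule V), T ⊆ D ∧
      (∀ d, d ∈ T ↔ d ∈ D ∧ d.pre ∈ Th (concls T) ∧ d.jus.neg ∉ E) ∧
      Gamma ∅ D E = Th (concls T) ∧
      (∀ S' : Set (DRule V),
        (∀ d ∈ D, d.pre ∈ Th (concls S') → d.jus.neg ∉ E → d ∈ S') → T ⊆ S') := by
  -- existence of a stabilization point
  have hfix : ∃ N, stage D E (N+1) = stage D E N := by
    by_contra hne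
    push_neg at hne
    have hsm : StrictMono (fun n => (stage D E n).ncard) := by
      apply strictMono_nat_of_lt_succ
      intro n
      exact Set.ncard_lt_ncard
        ⟨stage_mono_succ D E n,
          fun h => hne n (subset_antisymm h (stage_mono_succ D E n))⟩
        (hD.subset (stage_subset_D D E (n+1)))
    have h1 : D.ncard + 1 ≤ (stage D E (D.ncard + 1)).ncard := hsm.le_apply
    have h2 : (stage D E (D.ncard + 1)).ncard ≤ D.ncard :=
      Set.ncard_le_ncard (stage_subset_D D E _) hD
    omega
  obtain ⟨N, hN⟩ := hfix
  have hfixiff : ∀ d, d ∈ stage D E N ↔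
      d ∈ D ∧ d.pre ∈ Th (concls (stage D E N)) ∧ d.jus.neg ∉ E := by
    intro d
    conv_lhs => rw [← hN]
    simp only [stage, Set.mem_setOf_eq]
  refine ⟨stage D E N, stage_subset_D D E N, hfixiff, ?_, ?_⟩
  · -- Gamma = Th (concls T)
    apply subset_antisymm
    · apply Set.sInter_subset_of_mem
      refine ⟨Set.empty_subset _, Th_idem _, ?_⟩
      intro d hd hpre hjus
      exact subset_Th _ ⟨d, (hfixiff d).2 ⟨hd, hpre, hjus⟩, rfl⟩
    · intro x hx G hG
      obtain ⟨-, hcl, happ⟩ := hG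
      have hstage : ∀ n, concls (stage D E n) ⊆ G := by
        intro n
        induction n with
        | zero => simp [stage, concls]
        | succ n ih =>
          rintro c ⟨d, ⟨hd, hpre, hjus⟩, rfl⟩
          exact happ d hd (hcl (Th_mono ih hpre)) hjus
      exact hcl (Th_mono (hstage N) hx)
  · -- leastness
    intro S' hS'
    have : ∀ n, stage D E n ⊆ S' := by
      intro n
      induction n with
      | zero => simp [stage]
      | succ n ih =>
        rintro d ⟨hd, hpre, hjus⟩
        exact hS' d hd (Th_mono (concls_mono ih) hpre) hjus
    exact this N

/-- If S is a stable default set then Th(concls S) is a consistent stable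
extension whose set of generating defaults is exactly S. -/
lemma stableSet_props {D S : Set (DRule V)} (hD : D.Finite) (hS : StableSet D S) :
    StableExt (∅ : Set (PF V)) D (Th (concls S)) ∧ PF.bot ∉ Th (concls S) ∧
    S = {d | d ∈ D ∧ d.pre ∈ Th (concls S) ∧ d.jus.neg ∉ Th (concls S)} := by
  obtain ⟨⟨hSD, hsat⟩, hmin⟩ := hS
  set E := Th (concls S) with hE
  obtain ⟨T, hTD, hTiff, hGamma, hleast⟩ := exists_T D hD E
  -- consistency
  have hcons : PF.bot ∉ E := by
    intro hbot
    rw [hE, bot_mem_Th_iff] at hbot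
    rcases Set.eq_empty_or_nonempty S with hSe | hSne
    · exact hbot ⟨fun _ => true, by simp [hSe, concls]⟩
    · refine hmin ⟨∅, Set.empty_ssubset.2 hSne, ?_⟩
      intro d hd
      refine Or.inr (Or.inl ?_)
      rintro ⟨θ, hθ⟩
      exact hbot ⟨θ, fun f hf => hθ f (Or.inl hf)⟩
  -- T ⊆ S
  have hTS : T ⊆ S := by
    apply hleast
    intro d hd hpre hjus
    rcases hsat d hd with h | h | h
    · exact absurd hpre ((ASat_iff S d).1 h)
    · exact absurd ((BSat_iff S d).1 h) hjus
    · exact h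
  -- S = T
  have hST : S = T := by
    by_contra hne
    refine hmin ⟨T, ⟨hTS, fun h => hne (subset_antisymm h hTS)⟩, ?_⟩
    intro d hd
    by_cases hpre : d.pre ∈ Th (concls T)
    · by_cases hjus : d.jus.neg ∈ E
      · exact Or.inr (Or.inl ((BSat_iff S d).2 hjus))
      · exact Or.inr (Or.inr ((hTiff d).2 ⟨hd, hpre, hjus⟩))
    · exact Or.inl ((ASat_iff T d).2 hpre)
  refine ⟨?_, hcons, ?_⟩
  · rw [StableExt, hGamma]
    conv_lhs => rw [hE, hST]
  · ext d
    rw [Set.mem_setOf_eq]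
    have h := hTiff d
    rw [hE, hST] at h ⊢
    exact h

/-- Every stable extension of ⟨∅, D⟩ is Th(concls S) for a stable default set S. -/
lemma stableExt_exists {D : Set (DRule V)} {E : Set (PF V)} (hD : D.Finite)
    (hE : StableExt (∅ : Set (PF V)) D E) :
    ∃ S, StableSet D S ∧ E = Th (concls S) := by
  obtain ⟨T, hTD, hTiff, hGamma, hleast⟩ := exists_T D hD E
  have hET : E = Th (concls T) := hE.trans hGamma
  refine ⟨T, ⟨⟨hTD, ?_⟩, ?_⟩, hET⟩
  · intro d hd
    by_cases hpre : d.pre ∈ Th (concls T)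
    · by_cases hjus : d.jus.neg ∈ Th (concls T)
      · exact Or.inr (Or.inl ((BSat_iff T d).2 hjus))
      · refine Or.inr (Or.inr ((hTiff d).2 ⟨hd, hpre, ?_⟩))
        rw [hET]; exact hjus
    · exact Or.inl ((ASat_iff T d).2 hpre)
  · rintro ⟨S', hS'T, hS'⟩
    have : T ⊆ S' := by
      apply hleast
      intro d hd hpre hjus
      rcases hS' d hd with h | h | h
      · exact absurd hpre ((ASat_iff S' d).1 h)
      · rw [hET] at hjus
        exact absurd ((BSat_iff T d).1 h) hjus
      · exact h
    exact hS'T.2 this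

end Aux

/-- The consistent stable extensions of D (empty knowledge base) are exactly the
deductive closures Th(E(S)) for the stable default sets S of D; moreover each
stable default set S is the set of generating defaults of its extension. -/
theorem stable_extensions_eq_closures_of_stable_default_sets {V : Type}
    (D : Set (DRule V)) (hD : D.Finite) :
    ({E | StableExt (∅ : Set (PF V)) D E ∧ PF.bot ∉ E} =
      ⋃ S ∈ {S | StableSet D S}, {Th (concls S)}) ∧
    (∀ S, StableSet D S →
      S = {d | d ∈ D ∧ d.pre ∈ Th (concls S) ∧ d.jus.neg ∉ Th (concls S)}) := by
  constructor
  · ext E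
    simp only [Set.mem_setOf_eq, Set.mem_iUnion, Set.mem_singleton_iff, exists_prop]
    constructor
    · rintro ⟨hext, -⟩
      exact stableExt_exists hD hext
    · rintro ⟨S, hS, rfl⟩
      obtain ⟨h1, h2, -⟩ := stableSet_props hD hS
      exact ⟨h1, h2⟩
  · intro S hS
    exact (stableSet_props hD hS).2.2
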